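/- Let X be a measurable space, f : X → Measure X a measurable function all of whose values are probability measures, μ a probability measure on X, and define the iterates μ₀ = μ and μ_{n+1} = μ_n.bind f. Let Q : X → [0,∞] be a measurable function such that ∫⁻ Q d(f x) ≤ Q x + δ' for every x ∈ X. Then ∫⁻ Q dμ_n ≤ ∫⁻ Q dμ + n·δ' for every n ∈ ℕ. (This is the semantic core of the adversary rule in the higher-order expectation logic: if each oracle call increases the expected value of a quantity Q by at most δ', then k calls increase it by at most k·δ'.) -/

import Mathlib

open MeasureTheory ENNReal

/-- Semantic core of the adversary rule in the higher-order expectation logic: if each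
oracle call increases the expected value of a quantity `Q` by at most `δ'`, then `n`
calls increase it by at most `n·δ'`. -/
theorem iter_expectation {X : Type*} [MeasurableSpace X]
    (f : X → Measure X) (hf : Measurable f) (hfp : ∀ x, IsProbabilityMeasure (f x))
    (μ : Measure X) [IsProbabilityMeasure μ]
    (μs : ℕ → Measure X) (h0 : μs 0 = μ) (hsucc : ∀ n, μs (n + 1) = (μs n).bind f)
    (Q : X → ℝ≥0∞) (hQm : Measurable Q) (δ' : ℝ≥0∞)
    (hpres : ∀ x, ∫⁻ y, Q y ∂(f x) ≤ Q x + δ') :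
    ∀ n : ℕ, ∫⁻ x, Q x ∂(μs n) ≤ (∫⁻ x, Q x ∂μ) + n * δ' := by
  have hprob : ∀ n, IsProbabilityMeasure (μs n) := by
    intro n
    induction n with
    | zero => rw [h0]; infer_instance
    | succ n ih =>
      rw [hsucc]
      constructor
      rw [Measure.bind_apply MeasurableSet.univ hf.aemeasurable]
      simp only [(hfp _).measure_univ, lintegral_one]
      exact ih.measure_univ
  intro n
  induction n with
  | zero => simp [h0]
  | succ n ih =>
    rw [hsucc, Measure.lintegral_bind hf.aemeasurable hQm.aemeasurable, Nat.cast_add, Nat.cast_one]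
    calc ∫⁻ x, ∫⁻ y, Q y ∂(f x) ∂(μs n)
        ≤ ∫⁻ x, (Q x + δ') ∂(μs n) := lintegral_mono hpres
      _ = (∫⁻ x, Q x ∂(μs n)) + δ' := by
          rw [lintegral_add_right _ measurable_const, lintegral_const,
            (hprob n).measure_univ, mul_one]
      _ ≤ (∫⁻ x, Q x ∂μ) + n * δ' + δ' := add_le_add_left ih _
      _ = (∫⁻ x, Q x ∂μ) + (n + 1) * δ' := by ring
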